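/- Let 0 < l_z < 1. The volume of the set {(x,y,z) : 0 ≤ x,y ≤ 1, l_z ≤ z, z ≥ x+y−1, 2z ≤ x + y − √((x−y)² + 4·l_z·(1−x)·(1−y))} equals ((1 − l_z)/6)·(1 + 2·l_z·ln(l_z) − l_z²). -/

import Mathlib

open Set

-- equivalence of the SOC constraint with quadratic conditions
lemma soc_iff (l x y z : ℝ) (hx1 : x ≤ 1) (hy1 : y ≤ 1) (hl : 0 ≤ l) :
    2*z ≤ x + y - Real.sqrt ((x-y)^2 + 4*l*(1-x)*(1-y)) ↔
      (2*z ≤ x + y ∧ 0 ≤ (z-x)*(z-y) - l*(1-x)*(1-y)) := by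
  have hD : 0 ≤ (x-y)^2 + 4*l*(1-x)*(1-y) := by nlinarith [sq_nonneg (x-y), mul_nonneg (mul_nonneg hl (by linarith : (0:ℝ) ≤ 1-x)) (by linarith : (0:ℝ) ≤ 1-y)]
  constructor
  · intro h
    have hc : Real.sqrt ((x-y)^2 + 4*l*(1-x)*(1-y)) ≤ x + y - 2*z := by linarith
    have h2 : 0 ≤ x + y - 2*z := le_trans (Real.sqrt_nonneg _) hc
    have hsq : (x-y)^2 + 4*l*(1-x)*(1-y) ≤ (x + y - 2*z)^2 := by
      nlinarith [Real.sq_sqrt hD, Real.sqrt_nonneg ((x-y)^2 + 4*l*(1-x)*(1-y))]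
    exact ⟨by linarith, by nlinarith⟩
  · rintro ⟨h2, hq⟩
    have hsq : (x-y)^2 + 4*l*(1-x)*(1-y) ≤ (x + y - 2*z)^2 := by nlinarith
    have := Real.sqrt_le_sqrt hsq
    rw [Real.sqrt_sq (by linarith : 0 ≤ x + y - 2*z)] at this
    linarith

lemma slice_eq (l x z : ℝ) (h0 : 0 < l) (h1 : l < 1) :
    {y : ℝ | 0 ≤ x ∧ x ≤ 1 ∧ 0 ≤ y ∧ y ≤ 1 ∧ l ≤ z ∧ x + y - 1 ≤ z ∧
      2 * z ≤ x + y - Real.sqrt ((x - y) ^ 2 + 4 * l * (1 - x) * (1 - y))} =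
    if l ≤ z ∧ z ≤ x ∧ x ≤ 1 then
      Set.Icc (1 + z - x - (x-z)*(1-l)*(1-x)/(x-z+l*(1-x))) (1 + z - x) else ∅ := by
  split_ifs with hc
  · obtain ⟨hlz, hzx, hx1⟩ := hc
    have hd0 : 0 ≤ x - z + l*(1-x) := by nlinarith
    ext y
    simp only [Set.mem_setOf_eq, Set.mem_Icc]
    constructor
    · rintro ⟨hx0, hx1', hy0, hy1, hlz', hline, hsoc⟩
      rw [soc_iff l x y z (by linarith) (by linarith) (by linarith)] at hsoc
      obtain ⟨h2z, hq⟩ := hsoc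
      refine ⟨?_, by linarith⟩
      rcases eq_or_lt_of_le hd0 with hd | hd
      · -- d = 0 : x = z and x = 1
        have hxz : x = z ∧ x = 1 := by constructor <;> nlinarith
        obtain ⟨hxz1, hxz2⟩ := hxz
        have : (x-z)*(1-l)*(1-x) = 0 := by rw [hxz1]; ring
        rw [this, zero_div]
        linarith
      · -- d > 0
        have key : 1 + z - x - y ≤ (x-z)*(1-l)*(1-x)/(x-z+l*(1-x)) := by
          rw [le_div_iff₀ hd]; nlinarith
        linarith
    · intro hy
      obtain ⟨hya, hyb⟩ := hy
      have hlen_le_s : (x-z)*(1-l)*(1-x)/(x-z+l*(1-x)) ≤ 1 - z := by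
        rcases eq_or_lt_of_le hd0 with hd | hd
        · have hxz : x = z ∧ x = 1 := by constructor <;> nlinarith
          have : (x-z)*(1-l)*(1-x) = 0 := by rw [hxz.1]; ring
          rw [this, zero_div]; linarith
        · rw [div_le_iff₀ hd]
          nlinarith [sq_nonneg ((1-z)-(1-x)), mul_nonneg h0.le (sq_nonneg (1-z))]
      have hlen_le_b : (x-z)*(1-l)*(1-x)/(x-z+l*(1-x)) ≤ 1 + z - x := by
        rcases eq_or_lt_of_le hd0 with hd | hd
        · have hxz : x = z ∧ x = 1 := by constructor <;> nlinarith
          have : (x-z)*(1-l)*(1-x) = 0 := by rw [hxz.1]; ring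
          rw [this, zero_div]; linarith
        · rw [div_le_iff₀ hd]
          nlinarith [mul_nonneg (by linarith : (0:ℝ) ≤ (1-l)-(1-z)) (by linarith : (0:ℝ) ≤ (1-z)-(1-x)),
            mul_nonneg h0.le (by nlinarith : (0:ℝ) ≤ (1-z))]
      refine ⟨by linarith, hx1, by linarith, by linarith, hlz, by linarith, ?_⟩
      rw [soc_iff l x y z hx1 (by linarith) (by linarith)]
      refine ⟨by linarith, ?_⟩
      -- q ≥ 0
      rcases eq_or_lt_of_le hd0 with hd | hd
      · have hxz : x = z ∧ x = 1 := by constructor <;> nlinarith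
        obtain ⟨hxz1, hxz2⟩ := hxz
        subst hxz2
        rw [← hxz1]
        nlinarith
      · have hdy : (x - z + l*(1-x)) * ((1+z-x) - y) ≤ (x-z)*(1-l)*(1-x) := by
          have h2 : (1+z-x) - y ≤ (x-z)*(1-l)*(1-x)/(x-z+l*(1-x)) := by linarith
          calc (x - z + l*(1-x)) * ((1+z-x) - y)
              ≤ (x - z + l*(1-x)) * ((x-z)*(1-l)*(1-x)/(x-z+l*(1-x))) :=
                mul_le_mul_of_nonneg_left h2 hd.le
            _ = (x-z)*(1-l)*(1-x) := by field_simp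
        nlinarith
  · -- empty case
    ext y
    simp only [Set.mem_setOf_eq, Set.mem_empty_iff_false, iff_false]
    rintro ⟨hx0, hx1, hy0, hy1, hlz, hline, hsoc⟩
    have hxz : x < z := by
      by_contra h
      exact hc ⟨hlz, by linarith, hx1⟩
    rw [soc_iff l x y z hx1 hy1 h0.le] at hsoc
    obtain ⟨h2z, hq⟩ := hsoc
    -- s := 1 - z, u := 1 - x, v := 1 - y; u > s, u + v ≤ 2s, q ≥ 0
    have hs : 0 < 1 - z := by linarith
    rcases le_or_gt ((1-l)*(1-x)) (1-z) with hku | hku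
    · nlinarith [mul_nonneg (by linarith : (0:ℝ) ≤ 1-y) (by linarith : (0:ℝ) ≤ (1-z) - (1-l)*(1-x)),
        mul_pos hs (by linarith : (0:ℝ) < (1-x)-(1-z))]
    · nlinarith [mul_nonneg (by linarith : (0:ℝ) ≤ 2*(1-z)-(1-x)-(1-y)) (by linarith : (0:ℝ) ≤ (1-l)*(1-x)-(1-z)),
        sq_nonneg ((1-x)-(1-z)), mul_pos h0 (mul_pos hs hs)]
open Set MeasureTheory

lemma inner_integral (l z : ℝ) (h0 : 0 < l) (h1 : l < 1) (hz1 : z < 1) :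
    ∫ x in Set.Icc z 1, (x-z)*(1-l)*(1-x)/(x-z+l*(1-x)) =
      ((1-l^2)/2 + l*Real.log l)/(1-l)^2 * (1-z)^2 := by
  have hk : (0:ℝ) < 1 - l := by linarith
  have hdpos : ∀ x ∈ Set.uIcc z 1, 0 < x - z + l*(1-x) := by
    intro x hx
    rw [Set.uIcc_of_le hz1.le] at hx
    obtain ⟨hxa, hxb⟩ := hx
    nlinarith
  have hderiv : ∀ x ∈ Set.uIcc z 1, HasDerivAt
      (fun x => ((1+l)*(1-z)*((1-l)*x + (l-z)) - ((1-l)*x + (l-z))^2/2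
        - l*(1-z)^2 * Real.log ((1-l)*x + (l-z))) / (1-l)^2)
      ((x-z)*(1-l)*(1-x)/(x-z+l*(1-x))) x := by
    intro x hx
    have hdx : 0 < x - z + l*(1-x) := hdpos x hx
    have hdx' : 0 < (1-l)*x + (l-z) := by linarith
    have hne : (1-l)*x + (l-z) ≠ 0 := ne_of_gt hdx'
    have hlin : HasDerivAt (fun x : ℝ => (1-l)*x + (l-z)) (1-l) x := by
      simpa using ((hasDerivAt_id x).const_mul (1-l)).add_const (l-z)
    have hlog : HasDerivAt (fun x => Real.log ((1-l)*x + (l-z)))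
        (((1-l)*x + (l-z))⁻¹ * (1-l)) x := by have h := (Real.hasDerivAt_log hne).comp x hlin; exact h
    have hA : HasDerivAt (fun x : ℝ => (1+l)*(1-z)*((1-l)*x + (l-z)))
        ((1+l)*(1-z)*(1-l)) x := hlin.const_mul _
    have hB : HasDerivAt (fun x : ℝ => ((1-l)*x + (l-z))^2/2)
        (((1-l)*x + (l-z))*(1-l)) x := by
      have := (hlin.pow 2).div_const 2
      simpa [mul_comm, mul_assoc, mul_div_assoc] using this
      
    have hC : HasDerivAt (fun x => l*(1-z)^2 * Real.log ((1-l)*x + (l-z)))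
        (l*(1-z)^2 * (((1-l)*x + (l-z))⁻¹ * (1-l))) x := hlog.const_mul _
    have h := ((hA.sub hB).sub hC).div_const ((1-l)^2)
    refine h.congr_deriv ?_
    field_simp
    ring
  have hcont : ContinuousOn (fun x => (x-z)*(1-l)*(1-x)/(x-z+l*(1-x))) (Set.uIcc z 1) := by
    apply ContinuousOn.div
    · fun_prop
    · fun_prop
    · intro x hx; exact ne_of_gt (hdpos x hx)
  rw [MeasureTheory.integral_Icc_eq_integral_Ioc, ← intervalIntegral.integral_of_le hz1.le,
    intervalIntegral.integral_eq_sub_of_hasDerivAt hderiv (hcont.intervalIntegrable)]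
  rw [show (1-l)*1 + (l-z) = 1-z by ring, show (1-l)*z + (l-z) = l*(1-z) by ring,
    Real.log_mul (ne_of_gt h0) (by linarith : (1:ℝ)-z ≠ 0)]
  field_simp
  ring
open Set MeasureTheory

theorem stmt_15 (l_z : ℝ) (h0 : 0 < l_z) (h1 : l_z < 1) :
    MeasureTheory.volume {p : ℝ × ℝ × ℝ |
        0 ≤ p.1 ∧ p.1 ≤ 1 ∧ 0 ≤ p.2.1 ∧ p.2.1 ≤ 1 ∧ l_z ≤ p.2.2 ∧
        p.1 + p.2.1 - 1 ≤ p.2.2 ∧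
        2 * p.2.2 ≤ p.1 + p.2.1 -
          Real.sqrt ((p.1 - p.2.1) ^ 2 + 4 * l_z * (1 - p.1) * (1 - p.2.1))} =
      ENNReal.ofReal (((1 - l_z) / 6) * (1 + 2 * l_z * Real.log l_z - l_z ^ 2)) := by
  have hk : (0:ℝ) < 1 - l_z := by linarith
  set S : Set (ℝ × ℝ × ℝ) := {p : ℝ × ℝ × ℝ |
        0 ≤ p.1 ∧ p.1 ≤ 1 ∧ 0 ≤ p.2.1 ∧ p.2.1 ≤ 1 ∧ l_z ≤ p.2.2 ∧
        p.1 + p.2.1 - 1 ≤ p.2.2 ∧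
        2 * p.2.2 ≤ p.1 + p.2.1 -
          Real.sqrt ((p.1 - p.2.1) ^ 2 + 4 * l_z * (1 - p.1) * (1 - p.2.1))} with hSdef
  have hSm : MeasurableSet S := by
    rw [hSdef]
    apply IsClosed.measurableSet
    simp only [Set.setOf_and]
    repeat' apply IsClosed.inter
    all_goals (apply isClosed_le) <;> fun_prop
  have step1 : volume S = ∫⁻ x : ℝ, ∫⁻ z : ℝ,
      (if l_z ≤ z ∧ z ≤ x ∧ x ≤ 1 then
        ENNReal.ofReal ((x-z)*(1-l_z)*(1-x)/(x-z+l_z*(1-x))) else 0) := by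
    rw [MeasureTheory.Measure.volume_eq_prod, MeasureTheory.Measure.prod_apply hSm]
    refine lintegral_congr fun x => ?_
    have hsm2 : MeasurableSet (Prod.mk x ⁻¹' S) := hSm.preimage measurable_prodMk_left
    rw [MeasureTheory.Measure.volume_eq_prod, MeasureTheory.Measure.prod_apply_symm hsm2]
    refine lintegral_congr fun z => ?_
    have hset : ((fun y => (y, z)) ⁻¹' (Prod.mk x ⁻¹' S)) =
        {y : ℝ | 0 ≤ x ∧ x ≤ 1 ∧ 0 ≤ y ∧ y ≤ 1 ∧ l_z ≤ z ∧ x + y - 1 ≤ z ∧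
          2 * z ≤ x + y - Real.sqrt ((x - y) ^ 2 + 4 * l_z * (1 - x) * (1 - y))} := rfl
    rw [hset, slice_eq l_z x z h0 h1]
    split_ifs with hc
    · rw [Real.volume_Icc]
      congr 1
      ring
    · simp
  rw [step1]
  have hFm : Measurable (Function.uncurry (fun x z : ℝ =>
      (if l_z ≤ z ∧ z ≤ x ∧ x ≤ 1 then
        ENNReal.ofReal ((x-z)*(1-l_z)*(1-x)/(x-z+l_z*(1-x))) else 0))) := by
    apply Measurable.ite
    · simp only [Set.setOf_and]
      repeat' apply MeasurableSet.inter
      all_goals apply measurableSet_le <;> fun_prop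
    · apply Measurable.ennreal_ofReal
      fun_prop
    · exact measurable_const
  rw [lintegral_lintegral_swap hFm.aemeasurable]
  -- inner integral over x
  have hA0 : (0:ℝ) ≤ ((1-l_z^2)/2 + l_z*Real.log l_z)/(1-l_z)^2 := by
    have hval := inner_integral l_z l_z h0 h1 h1
    have hnn : 0 ≤ ∫ x in Set.Icc l_z 1, (x-l_z)*(1-l_z)*(1-x)/(x-l_z+l_z*(1-x)) := by
      apply setIntegral_nonneg measurableSet_Icc
      intro x hx
      apply div_nonneg
      · apply mul_nonneg (mul_nonneg (by linarith [hx.1]) hk.le) (by linarith [hx.2])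
      · nlinarith [hx.1, hx.2]
    rw [hval] at hnn
    by_contra hcon
    push_neg at hcon
    nlinarith [mul_neg_of_neg_of_pos hcon (by positivity : (0:ℝ) < (1-l_z)^2)]
  have step3 : ∀ z : ℝ, (∫⁻ x : ℝ,
      (if l_z ≤ z ∧ z ≤ x ∧ x ≤ 1 then
        ENNReal.ofReal ((x-z)*(1-l_z)*(1-x)/(x-z+l_z*(1-x))) else 0)) =
      Set.indicator (Set.Icc l_z 1)
        (fun z => ENNReal.ofReal (((1-l_z^2)/2 + l_z*Real.log l_z)/(1-l_z)^2 * (1-z)^2)) z := by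
    intro z
    by_cases hz : l_z ≤ z ∧ z ≤ 1
    · rw [Set.indicator_of_mem (Set.mem_Icc.2 hz)]
      rcases eq_or_lt_of_le hz.2 with hz1 | hz1
      · -- z = 1
        have hzero : ∀ x : ℝ, (if l_z ≤ z ∧ z ≤ x ∧ x ≤ 1 then
            ENNReal.ofReal ((x-z)*(1-l_z)*(1-x)/(x-z+l_z*(1-x))) else 0) = 0 := by
          intro x
          split_ifs with hc
          · have hx1 : x = 1 := le_antisymm hc.2.2 (hz1 ▸ hc.2.1)
            rw [hx1, hz1]
            norm_num
          · rfl
        rw [lintegral_congr hzero, hz1]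
        norm_num
      · -- z < 1
        have hind : ∀ x : ℝ, (if l_z ≤ z ∧ z ≤ x ∧ x ≤ 1 then
            ENNReal.ofReal ((x-z)*(1-l_z)*(1-x)/(x-z+l_z*(1-x))) else 0) =
            Set.indicator (Set.Icc z 1)
              (fun x => ENNReal.ofReal ((x-z)*(1-l_z)*(1-x)/(x-z+l_z*(1-x)))) x := by
          intro x
          rw [Set.indicator_apply]
          by_cases hx : x ∈ Set.Icc z 1
          · rw [if_pos ⟨hz.1, (Set.mem_Icc.1 hx).1, (Set.mem_Icc.1 hx).2⟩, if_pos hx]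
          · rw [if_neg, if_neg hx]
            intro hc
            exact hx (Set.mem_Icc.2 ⟨hc.2.1, hc.2.2⟩)
        rw [lintegral_congr hind, lintegral_indicator measurableSet_Icc]
        have hcont : ContinuousOn (fun x => (x-z)*(1-l_z)*(1-x)/(x-z+l_z*(1-x))) (Set.Icc z 1) := by
          apply ContinuousOn.div
          · fun_prop
          · fun_prop
          · intro x hx
            have := hx.1; have := hx.2
            nlinarith [hx.1, hx.2]
        have hint : IntegrableOn (fun x => (x-z)*(1-l_z)*(1-x)/(x-z+l_z*(1-x))) (Set.Icc z 1) :=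
          hcont.integrableOn_compact isCompact_Icc
        have hnn : 0 ≤ᵐ[volume.restrict (Set.Icc z 1)]
            (fun x => (x-z)*(1-l_z)*(1-x)/(x-z+l_z*(1-x))) := by
          filter_upwards [ae_restrict_mem measurableSet_Icc] with x hx
          apply div_nonneg
          · apply mul_nonneg (mul_nonneg (by linarith [hx.1]) hk.le) (by linarith [hx.2])
          · nlinarith [hx.1, hx.2]
        rw [← MeasureTheory.ofReal_integral_eq_lintegral_ofReal hint hnn,
          inner_integral l_z z h0 h1 hz1]
    · rw [Set.indicator_of_notMem (by simpa [Set.mem_Icc] using hz)]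
      have hzero : ∀ x : ℝ, (if l_z ≤ z ∧ z ≤ x ∧ x ≤ 1 then
          ENNReal.ofReal ((x-z)*(1-l_z)*(1-x)/(x-z+l_z*(1-x))) else 0) = 0 := by
        intro x
        rw [if_neg]
        intro hc
        exact hz ⟨hc.1, le_trans hc.2.1 hc.2.2⟩
      rw [lintegral_congr hzero]
      simp
  rw [lintegral_congr step3, lintegral_indicator measurableSet_Icc]
  have hint2 : IntegrableOn
      (fun z : ℝ => ((1-l_z^2)/2 + l_z*Real.log l_z)/(1-l_z)^2 * (1-z)^2) (Set.Icc l_z 1) :=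
    ((by fun_prop : Continuous (fun z : ℝ =>
      ((1-l_z^2)/2 + l_z*Real.log l_z)/(1-l_z)^2 * (1-z)^2)).continuousOn).integrableOn_compact
      isCompact_Icc
  have hnn2 : 0 ≤ᵐ[volume.restrict (Set.Icc l_z 1)]
      (fun z : ℝ => ((1-l_z^2)/2 + l_z*Real.log l_z)/(1-l_z)^2 * (1-z)^2) :=
    Filter.Eventually.of_forall fun z => mul_nonneg hA0 (sq_nonneg _)
  rw [← MeasureTheory.ofReal_integral_eq_lintegral_ofReal hint2 hnn2]
  have hcomp : ∫ z in Set.Icc l_z 1, ((1-l_z^2)/2 + l_z*Real.log l_z)/(1-l_z)^2 * (1-z)^2 =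
      ((1-l_z^2)/2 + l_z*Real.log l_z)/(1-l_z)^2 * ((1-l_z)^3/3) := by
    rw [MeasureTheory.integral_Icc_eq_integral_Ioc, ← intervalIntegral.integral_of_le h1.le]
    have hd : ∀ zz ∈ Set.uIcc l_z 1, HasDerivAt
        (fun z : ℝ => ((1-l_z^2)/2 + l_z*Real.log l_z)/(1-l_z)^2 * (-((1-z)^3/3)))
        (((1-l_z^2)/2 + l_z*Real.log l_z)/(1-l_z)^2 * (1-zz)^2) zz := by
      intro zz _
      have hlin : HasDerivAt (fun z : ℝ => 1 - z) (-1) zz := (hasDerivAt_id zz).const_sub 1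
      have hh := (((hlin.pow 3).div_const 3).neg).const_mul
        (((1-l_z^2)/2 + l_z*Real.log l_z)/(1-l_z)^2)
      refine hh.congr_deriv ?_
      ring
    rw [intervalIntegral.integral_eq_sub_of_hasDerivAt hd
      (Continuous.intervalIntegrable (by fun_prop) _ _)]
    ring
  rw [hcomp]
  congr 1
  field_simp
  ring
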